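/- Let t ≥ 1 be an integer, G a (2t+1)-regular graph, and r ≥ 2 a real number. If X ⊆ E(G) is a smallest r-minimal set, then the maximum degree of the subgraph of G induced by the edge set X satisfies Δ(G[X]) ≤ t. -/

import Mathlib

open Finset

/-- A finite loopless multigraph with vertex type `V` and edge type `E`;
`ends e` is the unordered pair of the two distinct endpoints of the edge `e`. -/
structure Multigraph (V E : Type) where
  ends : E → Sym2 V
  not_loop : ∀ e, ¬ (ends e).IsDiag

namespace Multigraph

variable {V E : Type} [Fintype V] [Fintype E] [DecidableEq V] [DecidableEq E]

/-- The edge `e` is incident with the vertex `v`. -/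
def Inc (G : Multigraph V E) (v : V) (e : E) : Prop := v ∈ G.ends e

instance (G : Multigraph V E) (v : V) (e : E) : Decidable (G.Inc v e) :=
  inferInstanceAs (Decidable (v ∈ G.ends e))

/-- The set of edges incident with `v`. -/
def incEdges (G : Multigraph V E) (v : V) : Finset E :=
  Finset.univ.filter fun e => G.Inc v e

/-- The degree of a vertex. -/
def degree (G : Multigraph V E) (v : V) : ℕ := (G.incEdges v).card

/-- `G` is `k`-regular. -/
def IsRegular (G : Multigraph V E) (k : ℕ) : Prop := ∀ v, G.degree v = k

/-- The set `N_σ` of negative edges of a signature `σ : E → ℤˣ`. -/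
def negEdges (G : Multigraph V E) (σ : E → ℤˣ) : Finset E :=
  Finset.univ.filter fun e => σ e = -1

/-- `τ` assigns a sign to every half-edge (i.e. to each edge at each of its endpoints);
it is an orientation of the signed graph `(G, σ)` if for every edge `e = uv` the two
half-edge signs multiply to `-σ e`. -/
def IsOrientation (G : Multigraph V E) (σ : E → ℤˣ) (τ : E → V → ℤˣ) : Prop :=
  ∀ e u v, G.ends e = s(u, v) → τ e u * τ e v = - σ e

/-- The boundary `δf(v) = ∑_{h at v} τ(h) f(e_h)` of `f` at `v`. -/
def boundary {R : Type} [CommRing R] (G : Multigraph V E) (τ : E → V → ℤˣ)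
    (f : E → R) (v : V) : R :=
  ∑ e ∈ G.incEdges v, (((τ e v : ℤˣ) : ℤ) : R) * f e

/-- `f` is a nowhere-zero `r`-flow on the signed graph `(G, σ)`:
for some orientation all boundaries vanish and `1 ≤ |f e| ≤ r - 1` for every edge. -/
def IsNZFlow (G : Multigraph V E) (σ : E → ℤˣ) (r : ℝ) (f : E → ℝ) : Prop :=
  ∃ τ, G.IsOrientation σ τ ∧ (∀ v, G.boundary τ f v = 0) ∧
    ∀ e, 1 ≤ |f e| ∧ |f e| ≤ r - 1

/-- `(G, σ)` admits a nowhere-zero `r`-flow. -/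
def HasNZFlow (G : Multigraph V E) (σ : E → ℤˣ) (r : ℝ) : Prop :=
  ∃ f, G.IsNZFlow σ r f

/-- `f` is a modular nowhere-zero `r`-flow on `(G, σ)`: for some orientation all
boundaries are `≡ 0 (mod r)` and `1 ≤ |f e| ≤ r - 1` for every edge. -/
def IsModularNZFlow (G : Multigraph V E) (σ : E → ℤˣ) (r : ℝ) (f : E → ℝ) : Prop :=
  ∃ τ, G.IsOrientation σ τ ∧ (∀ v, ∃ k : ℤ, G.boundary τ f v = k * r) ∧
    ∀ e, 1 ≤ |f e| ∧ |f e| ≤ r - 1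

/-- `f` is an integer-valued nowhere-zero `n`-flow on `(G, σ)`. -/
def IsIntNZFlow (G : Multigraph V E) (σ : E → ℤˣ) (n : ℕ) (f : E → ℤ) : Prop :=
  ∃ τ, G.IsOrientation σ τ ∧ (∀ v, G.boundary τ f v = 0) ∧
    ∀ e, 1 ≤ |f e| ∧ |f e| ≤ (n : ℤ) - 1

/-- `(G, σ)` admits an integer nowhere-zero `n`-flow. -/
def HasIntNZFlow (G : Multigraph V E) (σ : E → ℤˣ) (n : ℕ) : Prop :=
  ∃ f, G.IsIntNZFlow σ n f

/-- `(G, σ)` is flow-admissible: it has a nowhere-zero `r`-flow for some `r ≥ 2`. -/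
def FlowAdmissible (G : Multigraph V E) (σ : E → ℤˣ) : Prop :=
  ∃ r : ℝ, 2 ≤ r ∧ G.HasNZFlow σ r

/-- The circular flow number `F_c(G, σ)` (the least `r` admitting a nowhere-zero `r`-flow). -/
noncomputable def Fc (G : Multigraph V E) (σ : E → ℤˣ) : ℝ :=
  sInf {r : ℝ | 2 ≤ r ∧ G.HasNZFlow σ r}

/-- The integer flow number `F(G, σ)` (the least `n` admitting an integer
nowhere-zero `n`-flow). -/
noncomputable def Fi (G : Multigraph V E) (σ : E → ℤˣ) : ℕ :=
  sInf {n : ℕ | G.HasIntNZFlow σ n}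

/-- The flow spectrum `S(G)` of `G`. -/
def Spectrum (G : Multigraph V E) : Set ℝ :=
  {r | ∃ σ : E → ℤˣ, G.FlowAdmissible σ ∧ G.Fc σ = r}

/-- The integer flow spectrum `S̄(G)` of `G`. -/
def IntSpectrum (G : Multigraph V E) : Set ℕ :=
  {n | ∃ σ : E → ℤˣ, G.FlowAdmissible σ ∧ G.Fi σ = n}

/-- `F` is the edge set of a spanning `t`-regular subgraph (a `t`-factor) of `G`. -/
def IsFactor (G : Multigraph V E) (t : ℕ) (F : Finset E) : Prop :=
  ∀ v, (G.incEdges v ∩ F).card = t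

/-- `G` has a `t`-factor. -/
def HasFactor (G : Multigraph V E) (t : ℕ) : Prop := ∃ F, G.IsFactor t F

/-- `G - X` is bipartite. -/
def BipartiteOff (G : Multigraph V E) (X : Finset E) : Prop :=
  ∃ c : V → Bool, ∀ e ∉ X, ∀ u v, G.ends e = s(u, v) → c u ≠ c v

/-- `G` is bipartite. -/
def Bipartite (G : Multigraph V E) : Prop := G.BipartiteOff ∅

/-- `X` is an `r`-minimal set: some signature `σ` with `N_σ = X` has circular flow
number `r`, while no signature whose negative edge set is a proper subset of `X`
has circular flow number `r`. -/
def IsRMinimal (G : Multigraph V E) (r : ℝ) (X : Finset E) : Prop :=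
  (∃ σ, G.negEdges σ = X ∧ G.FlowAdmissible σ ∧ G.Fc σ = r) ∧
  ∀ σ, G.negEdges σ ⊂ X → ¬ (G.FlowAdmissible σ ∧ G.Fc σ = r)

/-- `X` is an `r`-minimal set of minimum cardinality. -/
def IsSmallestRMinimal (G : Multigraph V E) (r : ℝ) (X : Finset E) : Prop :=
  G.IsRMinimal r X ∧ ∀ Y, G.IsRMinimal r Y → X.card ≤ Y.card


/-- `u` and `v` are joined by an edge belonging to the edge set `F`. -/
def AdjOn (G : Multigraph V E) (F : Finset E) (u v : V) : Prop :=
  ∃ e ∈ F, G.ends e = s(u, v)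

/-- `u` and `v` are connected in the spanning subgraph with edge set `F`. -/
def ReachOn (G : Multigraph V E) (F : Finset E) : V → V → Prop :=
  Relation.ReflTransGen (G.AdjOn F)

/-- The connected component of `v` in the spanning subgraph with edge set `F`. -/
def componentOn (G : Multigraph V E) (F : Finset E) (v : V) : Set V :=
  {u | G.ReachOn F v u}

/-- The number of connected components of odd cardinality of the spanning subgraph
with edge set `F`.  For a `2`-factor `F` these components are precisely the odd
circuits of the `2`-factor. -/
noncomputable def numOddComponents (G : Multigraph V E) (F : Finset E) : ℕ :=
  Nat.card {S : Set V // (∃ v, S = G.componentOn F v) ∧ Odd (Nat.card S)}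

/-- The oddness `ω(G)`: the minimum number of odd circuits in a `2`-factor of `G`. -/
noncomputable def oddness (G : Multigraph V E) : ℕ :=
  sInf {k | ∃ F, G.IsFactor 2 F ∧ G.numOddComponents F = k}

/-- `e` is a bridge: its endpoints are disconnected after deleting `e`. -/
def IsBridge (G : Multigraph V E) (e : E) : Prop :=
  ∀ u v, G.ends e = s(u, v) → ¬ G.ReachOn (Finset.univ.erase e) u v

/-- `G` has no bridge. -/
def Bridgeless (G : Multigraph V E) : Prop := ∀ e, ¬ G.IsBridge e

/-- `c` is a proper edge coloring: edges sharing an endpoint get distinct colors. -/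
def IsProperEdgeColoring (G : Multigraph V E) {k : ℕ} (c : E → Fin k) : Prop :=
  ∀ e₁ e₂, e₁ ≠ e₂ → (∃ v, G.Inc v e₁ ∧ G.Inc v e₂) → c e₁ ≠ c e₂

/-- `G` is 3-edge-colorable. -/
def ThreeEdgeColorable (G : Multigraph V E) : Prop :=
  ∃ c : E → Fin 3, G.IsProperEdgeColoring c

/-- The resistance `r(G)`: the minimum cardinality of a color class, over all proper
4-edge-colorings of `G`. -/
noncomputable def resistance (G : Multigraph V E) : ℕ :=
  sInf {k | ∃ c : E → Fin 4, G.IsProperEdgeColoring c ∧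
    ∃ i : Fin 4, (Finset.univ.filter fun e => c e = i).card = k}

/-- Since our multigraphs are loopless, `G` is (isomorphic to) `K₂³` — the cubic graph
on two vertices joined by three parallel edges — iff it has exactly two vertices
and three edges. -/
def IsK23 (G : Multigraph V E) : Prop :=
  Fintype.card V = 2 ∧ Fintype.card E = 3

/-- `S` is an independent set of vertices (no edge joins two of its members). -/
def IsIndepSet (G : Multigraph V E) (S : Finset V) : Prop :=
  ∀ u ∈ S, ∀ v ∈ S, ∀ e : E, G.ends e ≠ s(u, v)

/-- The independence number `α(G)`. -/
noncomputable def indepNum (G : Multigraph V E) : ℕ :=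
  sSup {k | ∃ S : Finset V, G.IsIndepSet S ∧ S.card = k}

/-- The maximum degree `Δ(G[X])` of the subgraph of `G` induced by the edge set `X`. -/
def maxDegreeOn (G : Multigraph V E) (X : Finset E) : ℕ :=
  Finset.univ.sup fun v => (G.incEdges v ∩ X).card

/-- A circuit of `G` of length `n + 1`: pairwise distinct vertices `v_0, …, v_n` and
pairwise distinct edges `e_0, …, e_n` with `e_i` joining `v_i` and `v_{i+1}`
(indices mod `n + 1`). -/
structure Circuit (G : Multigraph V E) where
  n : ℕ
  vert : Fin (n + 1) → V
  edge : Fin (n + 1) → E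
  vert_inj : Function.Injective vert
  edge_inj : Function.Injective edge
  ends_eq : ∀ i, G.ends (edge i) = s(vert i, vert (i + 1))

/-- The number of negative edges on a circuit. -/
def Circuit.negCount {G : Multigraph V E} (σ : E → ℤˣ) (C : G.Circuit) : ℕ :=
  (Finset.univ.filter fun i => σ (C.edge i) = -1).card

/-- The subgraph of `(G, σ)` with edge set `F` is balanced: every circuit using only
edges of `F` contains an even number of negative edges. -/
def BalancedOn (G : Multigraph V E) (σ : E → ℤˣ) (F : Finset E) : Prop :=
  ∀ C : G.Circuit, (∀ i, C.edge i ∈ F) → Even (C.negCount σ)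

end Multigraph

open Multigraph


section Switching

variable {V E : Type} [Fintype V] [Fintype E] [DecidableEq V] [DecidableEq E]

/-- The signature obtained from `σ` by switching with the vertex sign function `μ`. -/
def switchSig (G : Multigraph V E) (σ : E → ℤˣ) (μ : V → ℤˣ) : E → ℤˣ :=
  fun e => σ e * Sym2.lift ⟨fun a b => μ a * μ b, fun a b => mul_comm _ _⟩ (G.ends e)

lemma isNZFlow_switch (G : Multigraph V E) (σ : E → ℤˣ) (μ : V → ℤˣ) (r : ℝ) (f : E → ℝ)
    (h : G.IsNZFlow σ r f) : G.IsNZFlow (switchSig G σ μ) r f := by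
  obtain ⟨τ, hτ, hb, hf⟩ := h
  refine ⟨fun e x => τ e x * μ x, ?_, ?_, hf⟩
  · intro e u v he
    simp only [switchSig, he, Sym2.lift_mk]
    rw [mul_mul_mul_comm, hτ e u v he, neg_mul]
  · intro v
    have h1 : G.boundary (fun e x => τ e x * μ x) f v
        = (((μ v : ℤˣ) : ℤ) : ℝ) * G.boundary τ f v := by
      unfold Multigraph.boundary
      rw [Finset.mul_sum]
      refine Finset.sum_congr rfl fun e _ => ?_
      push_cast
      ring
    rw [h1, hb v, mul_zero]

lemma switchSig_switchSig (G : Multigraph V E) (σ : E → ℤˣ) (μ : V → ℤˣ) :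
    switchSig G (switchSig G σ μ) μ = σ := by
  funext e
  simp only [switchSig, mul_assoc, Int.units_mul_self, mul_one]

lemma hasNZFlow_switch_iff (G : Multigraph V E) (σ : E → ℤˣ) (μ : V → ℤˣ) (r : ℝ) :
    G.HasNZFlow σ r ↔ G.HasNZFlow (switchSig G σ μ) r := by
  constructor
  · rintro ⟨f, hf⟩; exact ⟨f, isNZFlow_switch G σ μ r f hf⟩
  · rintro ⟨f, hf⟩
    have := isNZFlow_switch G _ μ r f hf
    rw [switchSig_switchSig] at this
    exact ⟨f, this⟩

lemma flowAdmissible_switch (G : Multigraph V E) (σ : E → ℤˣ) (μ : V → ℤˣ)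
    (h : G.FlowAdmissible σ) : G.FlowAdmissible (switchSig G σ μ) := by
  obtain ⟨ρ, h2, hflow⟩ := h
  exact ⟨ρ, h2, (hasNZFlow_switch_iff G σ μ ρ).mp hflow⟩

lemma Fc_switch (G : Multigraph V E) (σ : E → ℤˣ) (μ : V → ℤˣ) :
    G.Fc (switchSig G σ μ) = G.Fc σ := by
  unfold Multigraph.Fc
  congr 1
  ext ρ
  simp only [Set.mem_setOf_eq, ← hasNZFlow_switch_iff G σ μ ρ]

lemma negEdges_switch_vertex (G : Multigraph V E) (σ : E → ℤˣ) (v : V) :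
    G.negEdges (switchSig G σ (fun x => if x = v then -1 else 1)) =
      symmDiff (G.negEdges σ) (G.incEdges v) := by
  ext e
  obtain ⟨a, b, hab⟩ : ∃ a b, G.ends e = s(a, b) :=
    Sym2.ind (fun a b => ⟨a, b, rfl⟩) (G.ends e)
  have hne : a ≠ b := by
    have := G.not_loop e
    rw [hab, Sym2.mk_isDiag_iff] at this
    exact this
  have hinc : G.Inc v e ↔ (v = a ∨ v = b) := by
    rw [Multigraph.Inc, hab, Sym2.mem_iff]
  simp only [Finset.mem_symmDiff, Multigraph.negEdges, Multigraph.incEdges,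
    Finset.mem_filter, Finset.mem_univ, true_and, switchSig, hab, Sym2.lift_mk, hinc]
  by_cases hva : a = v <;> by_cases hvb : b = v
  · exact absurd (hva.trans hvb.symm) hne
  · rcases Int.units_eq_one_or (σ e) with h1 | h1 <;>
      simp [hva, hvb, h1, eq_comm (a := v), hab, Sym2.lift_mk] <;> decide
  · rcases Int.units_eq_one_or (σ e) with h1 | h1 <;>
      simp [hva, hvb, h1, eq_comm (a := v), hab, Sym2.lift_mk] <;> decide
  · rcases Int.units_eq_one_or (σ e) with h1 | h1 <;>
      simp [hva, hvb, h1, eq_comm (a := v), hab, Sym2.lift_mk] <;> decide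

end Switching
/-- Let `t ≥ 1`, let `G` be a `(2t+1)`-regular graph and `r ≥ 2`.  If `X ⊆ E(G)` is a
smallest `r`-minimal set, then the maximum degree of the subgraph of `G` induced by
the edge set `X` satisfies `Δ(G[X]) ≤ t`. -/
theorem stmt15 {V E : Type} [Fintype V] [Fintype E] [DecidableEq V] [DecidableEq E]
    (t : ℕ) (ht : 1 ≤ t) (G : Multigraph V E) (hreg : G.IsRegular (2 * t + 1))
    (r : ℝ) (hr : 2 ≤ r) (X : Finset E) (hX : G.IsSmallestRMinimal r X) :
    G.maxDegreeOn X ≤ t := by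
  classical
  by_contra hcon
  rw [Multigraph.maxDegreeOn, Finset.sup_le_iff] at hcon
  push_neg at hcon
  obtain ⟨v, -, hv⟩ := hcon
  -- switch at v
  obtain ⟨⟨⟨σ₀, hneg, hadm, hFc⟩, -⟩, hX2⟩ := hX
  set μ : V → ℤˣ := fun x => if x = v then -1 else 1 with hμ
  set σ' := switchSig G σ₀ μ with hσ'
  have hnegσ' : G.negEdges σ' = symmDiff X (G.incEdges v) := by
    rw [hσ', hμ, negEdges_switch_vertex, hneg]
  -- cardinality bound
  set I := G.incEdges v with hI
  have hIcard : I.card = 2 * t + 1 := hreg v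
  have hk : t + 1 ≤ (X ∩ I).card := by
    have := Finset.inter_comm I X ▸ hv
    omega
  have hkX : (X ∩ I).card ≤ X.card := Finset.card_le_card (Finset.inter_subset_left)
  have hkI : (X ∩ I).card ≤ I.card := Finset.card_le_card (Finset.inter_subset_right)
  have hc1 : (X ∩ I).card + (X \ I).card = X.card := Finset.card_inter_add_card_sdiff X I
  have hc2 : (I ∩ X).card + (I \ X).card = I.card := Finset.card_inter_add_card_sdiff I X
  have hIX : (I ∩ X).card = (X ∩ I).card := by rw [Finset.inter_comm]
  have hY0card : (symmDiff X I).card < X.card := by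
    have hdisj : Disjoint (X \ I) (I \ X) := disjoint_sdiff_sdiff
    have : (symmDiff X I).card = (X \ I).card + (I \ X).card := by
      rw [symmDiff_def, Finset.sup_eq_union, Finset.card_union_of_disjoint hdisj]
    omega
  -- the switched signature has Fc = r
  have hadm' : G.FlowAdmissible σ' := flowAdmissible_switch G σ₀ μ hadm
  have hFc' : G.Fc σ' = r := by rw [hσ', Fc_switch]; exact hFc
  -- find a minimal set inside negEdges σ'
  set Y0 := symmDiff X I with hY0
  set P : Finset E → Prop := fun Y => ∃ σ, G.negEdges σ = Y ∧ G.FlowAdmissible σ ∧ G.Fc σ = r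
    with hP
  set T : Finset (Finset E) := Y0.powerset.filter P with hT
  have hY0T : Y0 ∈ T := by
    rw [hT, Finset.mem_filter, Finset.mem_powerset]
    exact ⟨subset_rfl, σ', hnegσ', hadm', hFc'⟩
  obtain ⟨Y', hY'T, hmin⟩ := T.exists_min_image Finset.card ⟨Y0, hY0T⟩
  rw [hT, Finset.mem_filter, Finset.mem_powerset] at hY'T
  obtain ⟨hY'sub, σ₁, hσ₁⟩ := hY'T
  have hY'min : G.IsRMinimal r Y' := by
    refine ⟨⟨σ₁, hσ₁⟩, fun σ₂ hsub h2 => ?_⟩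
    obtain ⟨ha2, hf2⟩ := h2
    have hmem : G.negEdges σ₂ ∈ T := by
      rw [hT, Finset.mem_filter, Finset.mem_powerset]
      exact ⟨hsub.subset.trans hY'sub, σ₂, rfl, ha2, hf2⟩
    have := hmin _ hmem
    have hlt := Finset.card_lt_card hsub
    omega
  have h1 := hX2 Y' hY'min
  have h2 : Y'.card ≤ Y0.card := Finset.card_le_card hY'sub
  omega
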